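/- Let n : ℕ with n ≥ 4, and let v, v' : Fin (n+1) → ℍ satisfy ∑ a, normSq (v a) = 1, ∑ a, normSq (v' a) = 1, ν(v) = 0 and ν(v') = 0. Then there exists a real special orthogonal matrix A ∈ SO(n+1) (an orthogonal (n+1)×(n+1) real matrix of determinant 1) such that v' a = ∑ b, (A a b) • (v b) for all a, where real matrix entries act on quaternions by real scalar multiplication. (This is the transitivity of the natural SO(n+1)-action on the sphere-level zero set of the Sp(1)-moment map, used in the identification of ν⁻¹(0) with the homogeneous space SO(n+1)/(SO(n−3)×Sp(1)) in Theorem 3.2 (i).) -/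

import Mathlib

open Quaternion Finset

/-- The imaginary units `i`, `j`, `k` of the quaternions. -/
noncomputable def qi : Quaternion ℝ := ⟨0, 1, 0, 0⟩
noncomputable def qj : Quaternion ℝ := ⟨0, 0, 1, 0⟩
noncomputable def qk : Quaternion ℝ := ⟨0, 0, 0, 1⟩

section Aux

open Matrix

lemma keyI' (q : Quaternion ℝ) : star q * qi * q =
    ⟨0, q.re*q.re + q.imI*q.imI - q.imJ*q.imJ - q.imK*q.imK,
      2*(q.imI*q.imJ) - 2*(q.re*q.imK), 2*(q.re*q.imJ) + 2*(q.imI*q.imK)⟩ := by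
  ext <;> simp [show qi.re = 0 from rfl, show qi.imI = 1 from rfl, show qi.imJ = 0 from rfl, show qi.imK = 0 from rfl] <;> ring

lemma keyJ' (q : Quaternion ℝ) : star q * qj * q =
    ⟨0, 2*(q.re*q.imK) + 2*(q.imI*q.imJ),
      q.re*q.re + q.imJ*q.imJ - q.imI*q.imI - q.imK*q.imK,
      2*(q.imJ*q.imK) - 2*(q.re*q.imI)⟩ := by
  ext <;> simp [show qj.re = 0 from rfl, show qj.imI = 0 from rfl, show qj.imJ = 1 from rfl, show qj.imK = 0 from rfl] <;> ring

lemma keyK' (q : Quaternion ℝ) : star q * qk * q =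
    ⟨0, 2*(q.imI*q.imK) - 2*(q.re*q.imJ),
      2*(q.re*q.imI) + 2*(q.imJ*q.imK),
      q.re*q.re + q.imK*q.imK - q.imI*q.imI - q.imJ*q.imJ⟩ := by
  ext <;> simp [show qk.re = 0 from rfl, show qk.imI = 0 from rfl, show qk.imJ = 0 from rfl, show qk.imK = 1 from rfl] <;> ring

lemma sum_re' {α} (s : Finset α) (f : α → Quaternion ℝ) :
    (∑ a ∈ s, f a).re = ∑ a ∈ s, (f a).re := by
  induction s using Finset.cons_induction with
  | empty => simp
  | cons a s ha ih => simp [Finset.sum_cons, ih]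

lemma sum_imI' {α} (s : Finset α) (f : α → Quaternion ℝ) :
    (∑ a ∈ s, f a).imI = ∑ a ∈ s, (f a).imI := by
  induction s using Finset.cons_induction with
  | empty => simp
  | cons a s ha ih => simp [Finset.sum_cons, ih]

lemma sum_imJ' {α} (s : Finset α) (f : α → Quaternion ℝ) :
    (∑ a ∈ s, f a).imJ = ∑ a ∈ s, (f a).imJ := by
  induction s using Finset.cons_induction with
  | empty => simp
  | cons a s ha ih => simp [Finset.sum_cons, ih]

lemma sum_imK' {α} (s : Finset α) (f : α → Quaternion ℝ) :
    (∑ a ∈ s, f a).imK = ∑ a ∈ s, (f a).imK := by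
  induction s using Finset.cons_induction with
  | empty => simp
  | cons a s ha ih => simp [Finset.sum_cons, ih]

lemma correlations {m : ℕ} (u : Fin m → Quaternion ℝ)
    (hu : (∑ a, Quaternion.normSq (u a)) = 1)
    (h1 : (∑ a, star (u a) * qi * u a) = 0)
    (h2 : (∑ a, star (u a) * qj * u a) = 0)
    (h3 : (∑ a, star (u a) * qk * u a) = 0) :
    (∑ a, (u a).re * (u a).re) = 1/4 ∧ (∑ a, (u a).imI * (u a).imI) = 1/4 ∧
    (∑ a, (u a).imJ * (u a).imJ) = 1/4 ∧ (∑ a, (u a).imK * (u a).imK) = 1/4 ∧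
    (∑ a, (u a).re * (u a).imI) = 0 ∧ (∑ a, (u a).re * (u a).imJ) = 0 ∧
    (∑ a, (u a).re * (u a).imK) = 0 ∧ (∑ a, (u a).imI * (u a).imJ) = 0 ∧
    (∑ a, (u a).imI * (u a).imK) = 0 ∧ (∑ a, (u a).imJ * (u a).imK) = 0 := by
  set prr := ∑ a, (u a).re * (u a).re
  set pii := ∑ a, (u a).imI * (u a).imI
  set pjj := ∑ a, (u a).imJ * (u a).imJ
  set pkk := ∑ a, (u a).imK * (u a).imK
  set pri := ∑ a, (u a).re * (u a).imI
  set prj := ∑ a, (u a).re * (u a).imJ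
  set prk := ∑ a, (u a).re * (u a).imK
  set pij := ∑ a, (u a).imI * (u a).imJ
  set pik := ∑ a, (u a).imI * (u a).imK
  set pjk := ∑ a, (u a).imJ * (u a).imK
  simp only [keyI'] at h1
  simp only [keyJ'] at h2
  simp only [keyK'] at h3
  have e1 : prr + pii - pjj - pkk = 0 := by
    have := congrArg QuaternionAlgebra.imI h1
    erw [sum_imI'] at this
    simpa [Finset.sum_add_distrib, Finset.sum_sub_distrib] using this
  have e2 : 2*pij - 2*prk = 0 := by
    have := congrArg QuaternionAlgebra.imJ h1
    erw [sum_imJ'] at this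
    simpa [Finset.sum_sub_distrib, ← Finset.mul_sum] using this
  have e3 : 2*prj + 2*pik = 0 := by
    have := congrArg QuaternionAlgebra.imK h1
    erw [sum_imK'] at this
    simpa [Finset.sum_add_distrib, ← Finset.mul_sum] using this
  have e4 : 2*prk + 2*pij = 0 := by
    have := congrArg QuaternionAlgebra.imI h2
    erw [sum_imI'] at this
    simpa [Finset.sum_add_distrib, ← Finset.mul_sum] using this
  have e5 : prr + pjj - pii - pkk = 0 := by
    have := congrArg QuaternionAlgebra.imJ h2
    erw [sum_imJ'] at this
    simpa [Finset.sum_add_distrib, Finset.sum_sub_distrib] using this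
  have e6 : 2*pjk - 2*pri = 0 := by
    have := congrArg QuaternionAlgebra.imK h2
    erw [sum_imK'] at this
    simpa [Finset.sum_sub_distrib, ← Finset.mul_sum] using this
  have e7 : 2*pik - 2*prj = 0 := by
    have := congrArg QuaternionAlgebra.imI h3
    erw [sum_imI'] at this
    simpa [Finset.sum_sub_distrib, ← Finset.mul_sum] using this
  have e8 : 2*pri + 2*pjk = 0 := by
    have := congrArg QuaternionAlgebra.imJ h3
    erw [sum_imJ'] at this
    simpa [Finset.sum_add_distrib, ← Finset.mul_sum] using this
  have e9 : prr + pkk - pii - pjj = 0 := by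
    have := congrArg QuaternionAlgebra.imK h3
    erw [sum_imK'] at this
    simpa [Finset.sum_add_distrib, Finset.sum_sub_distrib] using this
  have e0 : prr + pii + pjj + pkk = 1 := by
    calc prr + pii + pjj + pkk
        = ∑ a, ((u a).re*(u a).re + (u a).imI*(u a).imI + (u a).imJ*(u a).imJ
            + (u a).imK*(u a).imK) := by
          rw [Finset.sum_add_distrib, Finset.sum_add_distrib, Finset.sum_add_distrib]
      _ = ∑ a, Quaternion.normSq (u a) :=
          Finset.sum_congr rfl fun a _ => by rw [Quaternion.normSq_def']; ring
      _ = 1 := hu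
  refine ⟨by linarith, by linarith, by linarith, by linarith, by linarith,
    by linarith, by linarith, by linarith, by linarith, by linarith⟩

/-- The four real coordinate vectors of a quaternionic vector, scaled by 2. -/
noncomputable def Xfam {m : ℕ} (u : Fin m → Quaternion ℝ) : Fin 4 → EuclideanSpace ℝ (Fin m) :=
  fun μ => (WithLp.equiv 2 (Fin m → ℝ)).symm
    (fun a => 2 * ![(u a).re, (u a).imI, (u a).imJ, (u a).imK] μ)

lemma Xfam_orthonormal {m : ℕ} (u : Fin m → Quaternion ℝ)
    (hu : (∑ a, Quaternion.normSq (u a)) = 1)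
    (h1 : (∑ a, star (u a) * qi * u a) = 0)
    (h2 : (∑ a, star (u a) * qj * u a) = 0)
    (h3 : (∑ a, star (u a) * qk * u a) = 0) :
    Orthonormal ℝ (Xfam u) := by
  obtain ⟨c1, c2, c3, c4, c5, c6, c7, c8, c9, c10⟩ := correlations u hu h1 h2 h3
  rw [orthonormal_iff_ite]
  have h4 : ∀ f g : Fin m → ℝ, (∑ a, (2 * f a) * (2 * g a)) = 4 * ∑ a, f a * g a := by
    intro f g; rw [Finset.mul_sum]; exact Finset.sum_congr rfl fun a _ => by ring
  have hmul : ∀ f g : Fin m → ℝ, ∀ r : ℝ, (∑ a, f a * g a) = r → (∑ a, (2 * f a) * (2 * g a)) = 4 * r := by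
    intro f g r h; rw [h4, h]
  intro μ ν
  fin_cases μ <;> fin_cases ν <;>
    simp only [Xfam, PiLp.inner_apply, RCLike.inner_apply, conj_trivial,
      WithLp.equiv_symm_apply, PiLp.toLp_apply, Matrix.cons_val_zero, Matrix.cons_val_one,
      Matrix.head_cons, Matrix.cons_val_two, Matrix.cons_val_three, Matrix.tail_cons,
      Fin.mk_one, Fin.isValue, if_true, if_false] <;>
    norm_num <;>
    (try rw [if_pos rfl]) <;> (try rw [if_neg (by decide)]) <;> (try norm_num) <;>
    first
      | (rw [hmul _ _ _ c1]; norm_num; done)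
      | (rw [hmul _ _ _ c2]; norm_num; done)
      | (rw [hmul _ _ _ c3]; norm_num; done)
      | (rw [hmul _ _ _ c4]; norm_num; done)
      | (rw [hmul _ _ _ c5]; norm_num; done)
      | (rw [hmul _ _ _ c6]; norm_num; done)
      | (rw [hmul _ _ _ c7]; norm_num; done)
      | (rw [hmul _ _ _ c8]; norm_num; done)
      | (rw [hmul _ _ _ c9]; norm_num; done)
      | (rw [hmul _ _ _ c10]; norm_num; done)
      | (rw [show (∑ a, (2 * (u a).imI) * (2 * (u a).re)) = 4 * ∑ a, (u a).re * (u a).imI from by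
            rw [Finset.mul_sum]; exact Finset.sum_congr rfl fun a _ => by ring, c5]; norm_num; done)
      | (rw [show (∑ a, (2 * (u a).imJ) * (2 * (u a).re)) = 4 * ∑ a, (u a).re * (u a).imJ from by
            rw [Finset.mul_sum]; exact Finset.sum_congr rfl fun a _ => by ring, c6]; norm_num; done)
      | (rw [show (∑ a, (2 * (u a).imK) * (2 * (u a).re)) = 4 * ∑ a, (u a).re * (u a).imK from by
            rw [Finset.mul_sum]; exact Finset.sum_congr rfl fun a _ => by ring, c7]; norm_num; done)
      | (rw [show (∑ a, (2 * (u a).imJ) * (2 * (u a).imI)) = 4 * ∑ a, (u a).imI * (u a).imJ from by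
            rw [Finset.mul_sum]; exact Finset.sum_congr rfl fun a _ => by ring, c8]; norm_num; done)
      | (rw [show (∑ a, (2 * (u a).imK) * (2 * (u a).imI)) = 4 * ∑ a, (u a).imI * (u a).imK from by
            rw [Finset.mul_sum]; exact Finset.sum_congr rfl fun a _ => by ring, c9]; norm_num; done)
      | (rw [show (∑ a, (2 * (u a).imK) * (2 * (u a).imJ)) = 4 * ∑ a, (u a).imJ * (u a).imK from by
            rw [Finset.mul_sum]; exact Finset.sum_congr rfl fun a _ => by ring, c10]; norm_num; done)

lemma keyOrtho (n : ℕ) (hn : 4 ≤ n) (x x' : Fin 4 → EuclideanSpace ℝ (Fin (n+1)))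
    (hx : Orthonormal ℝ x) (hx' : Orthonormal ℝ x') :
    ∃ A : Matrix.specialOrthogonalGroup (Fin (n+1)) ℝ,
      ∀ (μ : Fin 4) (a : Fin (n+1)),
        x' μ a = ∑ c, (A : Matrix (Fin (n+1)) (Fin (n+1)) ℝ) a c * x μ c := by
  classical
  have hfr : Module.finrank ℝ (EuclideanSpace ℝ (Fin (n+1))) = Fintype.card (Fin (n+1)) := by
    simp
  set s : Set (Fin (n+1)) := {i | (i : ℕ) < 4} with hs
  have key : ∀ y : Fin 4 → EuclideanSpace ℝ (Fin (n+1)), Orthonormal ℝ y →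
      ∃ b : OrthonormalBasis (Fin (n+1)) ℝ (EuclideanSpace ℝ (Fin (n+1))),
        ∀ (i : Fin (n+1)) (h : (i : ℕ) < 4), b i = y ⟨i, h⟩ := by
    intro y hy
    set w : Fin (n+1) → EuclideanSpace ℝ (Fin (n+1)) :=
      fun i => if h : (i : ℕ) < 4 then y ⟨i, h⟩ else 0 with hwdef
    have hw : Orthonormal ℝ (s.restrict w) := by
      rw [orthonormal_iff_ite]
      rintro ⟨i, hi⟩ ⟨j, hj⟩
      have hi' : (i : ℕ) < 4 := hi
      have hj' : (j : ℕ) < 4 := hj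
      have h2 := orthonormal_iff_ite.mp hy ⟨i, hi'⟩ ⟨j, hj'⟩
      show inner ℝ (w i) (w j) = _
      simp only [Set.restrict_apply, hwdef, dif_pos hi', dif_pos hj']
      rw [h2]
      congr 1
      simp only [eq_iff_iff, Subtype.ext_iff, Fin.ext_iff]
    obtain ⟨b, hb⟩ := hw.exists_orthonormalBasis_extension_of_card_eq hfr
    refine ⟨b, fun i h => ?_⟩
    rw [hb i h]
    simp only [hwdef, dif_pos h]
  obtain ⟨b, hb⟩ := key x hx
  obtain ⟨b', hb'⟩ := key x' hx'
  set M : Matrix (Fin (n+1)) (Fin (n+1)) ℝ := Matrix.of (fun a i => b i a) with hMdef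
  set M' : Matrix (Fin (n+1)) (Fin (n+1)) ℝ := Matrix.of (fun a i => b' i a) with hM'def
  have inner_fact : ∀ (c : OrthonormalBasis (Fin (n+1)) ℝ (EuclideanSpace ℝ (Fin (n+1))))
      (d i : Fin (n+1)), (∑ a, c d a * c i a) = if d = i then 1 else 0 := by
    intro c d i
    have h2 := orthonormal_iff_ite.mp c.orthonormal d i
    simpa [PiLp.inner_apply, RCLike.inner_apply, conj_trivial, mul_comm] using h2
  have hM : Mᵀ * M = 1 := by
    ext d i
    simpa [Matrix.mul_apply, Matrix.one_apply, hMdef] using inner_fact b d i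
  have hM' : M'ᵀ * M' = 1 := by
    ext d i
    simpa [Matrix.mul_apply, Matrix.one_apply, hM'def] using inner_fact b' d i
  have hdM : M.det * M.det = 1 := by
    have := congrArg Matrix.det hM
    simpa [Matrix.det_mul, Matrix.det_transpose] using this
  have hdM' : M'.det * M'.det = 1 := by
    have := congrArg Matrix.det hM'
    simpa [Matrix.det_mul, Matrix.det_transpose] using this
  set σ : ℝ := M'.det * M.det with hσdef
  have hσ : σ * σ = 1 := by
    have : σ * σ = (M'.det * M'.det) * (M.det * M.det) := by ring
    rw [this, hdM, hdM', one_mul]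
  set D : Matrix (Fin (n+1)) (Fin (n+1)) ℝ :=
    Matrix.diagonal (fun i => if i = Fin.last n then σ else 1) with hDdef
  have hDT : Dᵀ = D := Matrix.diagonal_transpose _
  have hD2 : D * D = 1 := by
    rw [hDdef, Matrix.diagonal_mul_diagonal]
    have he : (fun i => (if i = Fin.last n then σ else 1) * (if i = Fin.last n then σ else 1))
        = fun _ : Fin (n+1) => (1:ℝ) := by
      funext i; by_cases h : i = Fin.last n <;> simp [h, hσ]
    rw [he, Matrix.diagonal_one]
  have hDdet : D.det = σ := by
    simp [hDdef, Matrix.det_diagonal, Finset.prod_ite_eq']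
  set N : Matrix (Fin (n+1)) (Fin (n+1)) ℝ := M' * D with hNdef
  set A : Matrix (Fin (n+1)) (Fin (n+1)) ℝ := N * Mᵀ with hAdef
  have hMM' : M' * M'ᵀ = 1 := mul_eq_one_comm.mp hM'
  have hAAT : A * Aᵀ = 1 := by
    have h1 : A * Aᵀ = N * (Mᵀ * M) * Nᵀ := by
      rw [hAdef, Matrix.transpose_mul, Matrix.transpose_transpose, hNdef]
      simp only [Matrix.mul_assoc]
    rw [h1, hM, Matrix.mul_one, hNdef, Matrix.transpose_mul, hDT]
    calc M' * D * (D * M'ᵀ) = M' * ((D * D) * M'ᵀ) := by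
          simp only [Matrix.mul_assoc]
      _ = 1 := by rw [hD2, Matrix.one_mul, hMM']
  have hAdet : A.det = 1 := by
    rw [hAdef, Matrix.det_mul, hNdef, Matrix.det_mul, hDdet, Matrix.det_transpose]
    rw [hσdef]; ring_nf
    nlinarith [hdM, hdM']
  have hmem : A ∈ Matrix.specialOrthogonalGroup (Fin (n+1)) ℝ := by
    rw [Matrix.mem_specialOrthogonalGroup_iff]
    constructor
    · rw [Matrix.mem_orthogonalGroup_iff]
      have hst : star A = Aᵀ := by
        ext a c; simp [Matrix.star_eq_conjTranspose, Matrix.conjTranspose_apply]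
      exact hAAT
    · exact hAdet
  refine ⟨⟨A, hmem⟩, fun μ a => ?_⟩
  have hi4 : ((Fin.castLE (by omega : 4 ≤ n+1) μ : Fin (n+1)) : ℕ) < 4 := by
    simpa using μ.isLt
  set i : Fin (n+1) := Fin.castLE (by omega : 4 ≤ n+1) μ with hidef
  have hine : i ≠ Fin.last n := by
    intro h
    have : (i : ℕ) = n := by rw [h]; simp
    omega
  have hxi : x μ = b i := by
    rw [hb i hi4]
    congr 1
  have hxi' : x' μ = b' i := by
    rw [hb' i hi4]
    congr 1
  have hsum : ∑ c, A a c * x μ c = (A * M) a i := by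
    rw [Matrix.mul_apply]
    refine Finset.sum_congr rfl fun c _ => ?_
    rw [hxi]
    rfl
  have hAM : A * M = N := by
    rw [hAdef, Matrix.mul_assoc, hM, Matrix.mul_one]
  rw [hsum, hAM, hNdef, Matrix.mul_diagonal, if_neg hine, mul_one, hxi']
  rfl

end Aux

/-- Transitivity of the natural `SO(n+1)`-action on the sphere-level zero set of the
`Sp(1)`-moment map. -/
theorem stmt_12 (n : ℕ) (hn : 4 ≤ n) (v v' : Fin (n + 1) → Quaternion ℝ)
    (hv : (∑ a, Quaternion.normSq (v a)) = 1) (hv' : (∑ a, Quaternion.normSq (v' a)) = 1)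
    (hνv : (∑ a, star (v a) * qi * v a) = 0 ∧ (∑ a, star (v a) * qj * v a) = 0 ∧
      (∑ a, star (v a) * qk * v a) = 0)
    (hνv' : (∑ a, star (v' a) * qi * v' a) = 0 ∧ (∑ a, star (v' a) * qj * v' a) = 0 ∧
      (∑ a, star (v' a) * qk * v' a) = 0) :
    ∃ A : Matrix.specialOrthogonalGroup (Fin (n + 1)) ℝ,
      ∀ a, v' a = ∑ b, (A : Matrix (Fin (n + 1)) (Fin (n + 1)) ℝ) a b • v b := by
  obtain ⟨h1, h2, h3⟩ := hνv
  obtain ⟨h1', h2', h3'⟩ := hνv'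
  obtain ⟨A, hA⟩ := keyOrtho n hn (Xfam v) (Xfam v')
    (Xfam_orthonormal v hv h1 h2 h3) (Xfam_orthonormal v' hv' h1' h2' h3')
  refine ⟨A, fun a => ?_⟩
  have pull : ∀ (f : Fin (n+1) → ℝ) (g : Fin (n+1) → ℝ),
      (∑ c, g c * (2 * f c)) = 2 * ∑ c, g c * f c := by
    intro f g; rw [Finset.mul_sum]; exact Finset.sum_congr rfl fun c _ => by ring
  have hre : (v' a).re = ∑ b, (A : Matrix (Fin (n+1)) (Fin (n+1)) ℝ) a b * (v b).re := by
    have h := hA 0 a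
    simp only [Xfam, WithLp.equiv_symm_apply, PiLp.toLp_apply, Matrix.cons_val_zero] at h
    rw [pull] at h
    linarith
  have himI : (v' a).imI = ∑ b, (A : Matrix (Fin (n+1)) (Fin (n+1)) ℝ) a b * (v b).imI := by
    have h := hA 1 a
    simp only [Xfam, WithLp.equiv_symm_apply, PiLp.toLp_apply, Matrix.cons_val_one, Matrix.head_cons, Matrix.cons_val_zero] at h
    rw [pull] at h
    linarith
  have himJ : (v' a).imJ = ∑ b, (A : Matrix (Fin (n+1)) (Fin (n+1)) ℝ) a b * (v b).imJ := by
    have h := hA 2 a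
    simp only [Xfam, WithLp.equiv_symm_apply, PiLp.toLp_apply, Matrix.cons_val_two, Matrix.tail_cons,
      Matrix.head_cons] at h
    rw [pull] at h
    linarith
  have himK : (v' a).imK = ∑ b, (A : Matrix (Fin (n+1)) (Fin (n+1)) ℝ) a b * (v b).imK := by
    have h := hA 3 a
    simp only [Xfam, WithLp.equiv_symm_apply, PiLp.toLp_apply, Matrix.cons_val_three, Matrix.tail_cons,
      Matrix.head_cons] at h
    rw [pull] at h
    linarith
  ext
  · rw [sum_re', hre]
    exact Finset.sum_congr rfl fun b _ => by simp [Quaternion.re_smul]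
  · rw [sum_imI', himI]
    exact Finset.sum_congr rfl fun b _ => by simp [Quaternion.imI_smul]
  · rw [sum_imJ', himJ]
    exact Finset.sum_congr rfl fun b _ => by simp [Quaternion.imJ_smul]
  · rw [sum_imK', himK]
    exact Finset.sum_congr rfl fun b _ => by simp [Quaternion.imK_smul]
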